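/- Fix n ∈ ℕ and i, j ∈ G with μ^{*n}(i⁻¹j) > 0. Then there exists a bounded linear operator S on the Fock space ℓ²(I) with operator norm ‖S‖ ≤ 1 such that for every index (m, j', k) ∈ I: if j' = j then S e^{(m)}_{j',k} = √(μ^{*n}(i⁻¹j)·μ^{*m}(j⁻¹k)/μ^{*(n+m)}(i⁻¹k))·e^{(n+m)}_{i,k} (the target index (n+m, i, k) lies in I since μ^{*(n+m)}(i⁻¹k) ≥ μ^{*n}(i⁻¹j)·μ^{*m}(j⁻¹k) > 0), and if j' ≠ j then S e^{(m)}_{j',k} = 0. -/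

import Mathlib

open Filter Topology
open scoped Classical

noncomputable section

/-- The index set of the Fock space of the random walk: triples (m, j, k) with
μ^{*m}(j⁻¹k) > 0. -/
def FockIndex {G : Type*} [Group G] (ν : ℕ → G → ℝ) : Type _ :=
  {p : ℕ × G × G // 0 < ν p.1 (p.2.1⁻¹ * p.2.2)}

/-- The Fock space ℓ²(I) of the random walk. -/
abbrev FockSpace {G : Type*} [Group G] (ν : ℕ → G → ℝ) : Type _ :=
  lp (fun _ : FockIndex ν => ℝ) 2

/-- The orthonormal basis vector e^{(m)}_{j,k} of the Fock space. -/
def fockVec {G : Type*} [Group G] (ν : ℕ → G → ℝ) (i : FockIndex ν) : FockSpace ν :=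
  lp.single 2 i 1

private lemma finsum_le_finsum'' {α : Type*} {f g : α → ℝ} (h : ∀ a, f a ≤ g a)
    (hf : (Function.support f).Finite) (hg : (Function.support g).Finite) :
    ∑ᶠ a, f a ≤ ∑ᶠ a, g a := by
  classical
  have hs : Function.support f ⊆ ((hf.union hg).toFinset : Set α) := by
    intro a ha; simp [Set.Finite.mem_toFinset]; exact Or.inl ha
  have ht : Function.support g ⊆ ((hf.union hg).toFinset : Set α) := by
    intro a ha; simp [Set.Finite.mem_toFinset]; exact Or.inr ha
  rw [finsum_eq_sum_of_support_subset f hs, finsum_eq_sum_of_support_subset g ht]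
  exact Finset.sum_le_sum fun a _ => h a

section nu
variable {G : Type*} [Group G] (μ : G → ℝ) (ν : ℕ → G → ℝ)

private lemma nu_nonneg (hμnn : ∀ g : G, 0 ≤ μ g)
    (hν0 : ∀ x : G, ν 0 x = if x = 1 then 1 else 0)
    (hνs : ∀ (m : ℕ) (x : G), ν (m + 1) x = ∑ᶠ g : G, ν m g * μ (g⁻¹ * x)) :
    ∀ (m : ℕ) (x : G), 0 ≤ ν m x := by
  intro m
  induction m with
  | zero => intro x; rw [hν0]; split <;> norm_num
  | succ m ih =>
    intro x
    rw [hνs]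
    exact finsum_nonneg fun g => mul_nonneg (ih g) (hμnn _)

private lemma nu_support_finite (hμfin : (Function.support μ).Finite)
    (hν0 : ∀ x : G, ν 0 x = if x = 1 then 1 else 0)
    (hνs : ∀ (m : ℕ) (x : G), ν (m + 1) x = ∑ᶠ g : G, ν m g * μ (g⁻¹ * x)) :
    ∀ m : ℕ, (Function.support (ν m)).Finite := by
  intro m
  induction m with
  | zero =>
    apply Set.Finite.subset (Set.finite_singleton (1 : G))
    intro x hx
    simp only [Function.mem_support, hν0] at hx
    by_contra hx1
    simp [Set.mem_singleton_iff] at hx1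
    exact hx (if_neg hx1)
  | succ m ih =>
    apply Set.Finite.subset (((ih.prod hμfin).image (fun p => p.1 * p.2)))
    intro x hx
    simp only [Function.mem_support, hνs] at hx
    have : ∃ g, ν m g * μ (g⁻¹ * x) ≠ 0 := by
      by_contra hc
      push_neg at hc
      exact hx (finsum_eq_zero_of_forall_eq_zero hc)
    obtain ⟨g, hg⟩ := this
    refine ⟨(g, g⁻¹ * x), ?_, by simp⟩
    constructor
    · exact Function.mem_support.2 (left_ne_zero_of_mul hg)
    · exact Function.mem_support.2 (right_ne_zero_of_mul hg)

private lemma nu_submul (hμnn : ∀ g : G, 0 ≤ μ g) (hμfin : (Function.support μ).Finite)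
    (hν0 : ∀ x : G, ν 0 x = if x = 1 then 1 else 0)
    (hνs : ∀ (m : ℕ) (x : G), ν (m + 1) x = ∑ᶠ g : G, ν m g * μ (g⁻¹ * x))
    (n : ℕ) (i j : G) :
    ∀ (m : ℕ) (k : G), ν n (i⁻¹ * j) * ν m (j⁻¹ * k) ≤ ν (n + m) (i⁻¹ * k) := by
  have hnn := nu_nonneg μ ν hμnn hν0 hνs
  have hfin := nu_support_finite μ ν hμfin hν0 hνs
  intro m
  induction m with
  | zero =>
    intro k
    rw [hν0]
    by_cases hk : j⁻¹ * k = 1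
    · rw [inv_mul_eq_one] at hk
      subst hk
      simp
    · rw [if_neg hk, mul_zero]
      exact hnn _ _
  | succ m ih =>
    intro k
    have ha : ν (m + 1) (j⁻¹ * k) = ∑ᶠ h : G, ν m (j⁻¹ * h) * μ (h⁻¹ * k) := by
      rw [hνs]
      rw [← finsum_comp_equiv (Equiv.mulLeft j⁻¹)
        (f := fun g : G => ν m g * μ (g⁻¹ * (j⁻¹ * k)))]
      apply finsum_congr
      intro h
      rw [show ((Equiv.mulLeft j⁻¹) h : G) = j⁻¹ * h from rfl,
        show (j⁻¹ * h)⁻¹ * (j⁻¹ * k) = h⁻¹ * k by group]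
    have hb : ν (n + (m + 1)) (i⁻¹ * k) = ∑ᶠ h : G, ν (n + m) (i⁻¹ * h) * μ (h⁻¹ * k) := by
      rw [show n + (m + 1) = (n + m) + 1 by ring, hνs]
      rw [← finsum_comp_equiv (Equiv.mulLeft i⁻¹)
        (f := fun g : G => ν (n + m) g * μ (g⁻¹ * (i⁻¹ * k)))]
      apply finsum_congr
      intro h
      rw [show ((Equiv.mulLeft i⁻¹) h : G) = i⁻¹ * h from rfl,
        show (i⁻¹ * h)⁻¹ * (i⁻¹ * k) = h⁻¹ * k by group]
    have hsuppa : (Function.support fun h : G => ν m (j⁻¹ * h) * μ (h⁻¹ * k)).Finite := by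
      apply Set.Finite.subset ((hfin m).preimage
        (Set.injOn_of_injective (mul_right_injective j⁻¹)))
      intro h hh
      exact Function.mem_support.2 (left_ne_zero_of_mul hh)
    have hsuppb : (Function.support fun h : G => ν (n + m) (i⁻¹ * h) * μ (h⁻¹ * k)).Finite := by
      apply Set.Finite.subset ((hfin (n + m)).preimage
        (Set.injOn_of_injective (mul_right_injective i⁻¹)))
      intro h hh
      exact Function.mem_support.2 (left_ne_zero_of_mul hh)
    rw [ha, hb, mul_finsum _ _]
    apply finsum_le_finsum'' _ _ hsuppb
    · intro h
      rw [← mul_assoc]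
      exact mul_le_mul_of_nonneg_right (ih h) (hμnn _)
    · apply Set.Finite.subset hsuppa
      intro h hh
      simp only [Function.mem_support] at hh ⊢
      intro hz
      exact hh (by rw [hz, mul_zero])

end nu

private theorem exists_weighted_comp {ι : Type*} (Q : ι → Prop) (pre : ι → ι) (c : ι → ℝ)
    (hinj : ∀ q q', Q q → Q q' → pre q = pre q' → q = q')
    (hc : ∀ q, Q q → |c q| ≤ 1) :
    ∃ S : lp (fun _ : ι => ℝ) 2 →L[ℝ] lp (fun _ : ι => ℝ) 2, ‖S‖ ≤ 1 ∧
      ∀ (x : lp (fun _ : ι => ℝ) 2) (q : ι),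
        S x q = if Q q then c q * x (pre q) else 0 := by
  classical
  set e : ℝ := (2 : ENNReal).toReal with he_def
  have he : 0 < e := by norm_num [he_def]
  set T : (ι → ℝ) → ι → ℝ := fun x q => if Q q then c q * x (pre q) else 0 with hT
  have hTbound : ∀ (x : ι → ℝ) (q : ι), Q q → ‖T x q‖ ≤ ‖x (pre q)‖ := by
    intro x q hq
    simp only [hT, if_pos hq, norm_mul]
    calc ‖c q‖ * ‖x (pre q)‖ ≤ 1 * ‖x (pre q)‖ :=
          mul_le_mul_of_nonneg_right (by simpa using hc q hq) (norm_nonneg _)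
      _ = ‖x (pre q)‖ := one_mul _
  have hinj' : Function.Injective (fun s : {q // Q q} => pre s.1) := by
    rintro ⟨q, hq⟩ ⟨q', hq'⟩ h
    exact Subtype.ext (hinj q q' hq hq' h)
  have key : ∀ x : ι → ℝ, Summable (fun p => ‖x p‖ ^ e) →
      Summable (fun q => ‖T x q‖ ^ e) ∧
        ∑' q, ‖T x q‖ ^ e ≤ ∑' p, ‖x p‖ ^ e := by
    intro x hx
    have hfs : Function.support (fun q => ‖T x q‖ ^ e) ⊆ {q | Q q} := by
      intro q hq
      by_contra hQ
      simp only [Set.mem_setOf_eq] at hQ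
      apply hq
      simp only [hT, if_neg hQ, norm_zero, Real.zero_rpow he.ne']
    have hle : ∀ s : {q // Q q}, ‖T x s.1‖ ^ e ≤ ‖x (pre s.1)‖ ^ e := fun s =>
      Real.rpow_le_rpow (norm_nonneg _) (hTbound x s.1 s.2) he.le
    have hgsum : Summable (fun s : {q // Q q} => ‖x (pre s.1)‖ ^ e) :=
      hx.comp_injective hinj'
    have hfsub : Summable (fun s : {q // Q q} => ‖T x s.1‖ ^ e) :=
      Summable.of_nonneg_of_le (fun s => Real.rpow_nonneg (norm_nonneg _) e) hle hgsum
    have hsumm : Summable (fun q => ‖T x q‖ ^ e) := by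
      obtain ⟨a, ha⟩ := hfsub
      exact ⟨a, (hasSum_subtype_iff_of_support_subset hfs).1 ha⟩
    refine ⟨hsumm, ?_⟩
    rw [← tsum_subtype_eq_of_support_subset hfs]
    exact hfsub.tsum_le_tsum_of_inj (fun s : {q // Q q} => pre s.1) hinj'
      (fun b _ => Real.rpow_nonneg (norm_nonneg _) e) hle hx
  have hmem : ∀ x : lp (fun _ : ι => ℝ) 2, Memℓp (T ⇑x) 2 := by
    intro x
    exact memℓp_gen (key ⇑x ((memℓp_gen_iff he).1 (lp.memℓp x))).1
  set Tlin : lp (fun _ : ι => ℝ) 2 →ₗ[ℝ] lp (fun _ : ι => ℝ) 2 :=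
    { toFun := fun x => ⟨T ⇑x, hmem x⟩
      map_add' := by
        intro x y
        apply Subtype.ext
        funext q
        show (if Q q then c q * (⇑(x + y)) (pre q) else 0) =
          (if Q q then c q * (⇑x) (pre q) else 0) + (if Q q then c q * (⇑y) (pre q) else 0)
        by_cases hq : Q q <;>
          simp [hq, lp.coeFn_add, mul_add]
      map_smul' := by
        intro r x
        apply Subtype.ext
        funext q
        show (if Q q then c q * (⇑(r • x)) (pre q) else 0) =
          r • (if Q q then c q * (⇑x) (pre q) else 0)
        by_cases hq : Q q <;>
          simp [hq, lp.coeFn_smul, mul_left_comm] } with hTlin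
  have hbound : ∀ x, ‖Tlin x‖ ≤ 1 * ‖x‖ := by
    intro x
    rw [one_mul]
    have hx := (memℓp_gen_iff he).1 (lp.memℓp x)
    have h1 : ‖Tlin x‖ ^ e = ∑' q, ‖T ⇑x q‖ ^ e := lp.norm_rpow_eq_tsum he (Tlin x)
    have h2 : ‖x‖ ^ e = ∑' p, ‖(⇑x) p‖ ^ e := lp.norm_rpow_eq_tsum he x
    by_contra hab
    push_neg at hab
    have := Real.rpow_lt_rpow (norm_nonneg x) hab he
    rw [h1, h2] at this
    exact absurd (key ⇑x hx).2 (not_le.2 this)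
  refine ⟨Tlin.mkContinuous 1 hbound, Tlin.mkContinuous_norm_le zero_le_one hbound, ?_⟩
  intro x q
  simp only [LinearMap.mkContinuous_apply]
  rfl

private def wQ {G : Type*} [Group G] (ν : ℕ → G → ℝ) (n : ℕ) (i j : G)
    (q : FockIndex ν) : Prop :=
  q.1.2.1 = i ∧ n ≤ q.1.1 ∧ 0 < ν (q.1.1 - n) (j⁻¹ * q.1.2.2)

private def wpre {G : Type*} [Group G] (ν : ℕ → G → ℝ) (n : ℕ) (i j : G)
    (q : FockIndex ν) : FockIndex ν :=
  if h : wQ ν n i j q then ⟨(q.1.1 - n, j, q.1.2.2), h.2.2⟩ else q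

private lemma wpre_pos {G : Type*} [Group G] {ν : ℕ → G → ℝ} {n : ℕ} {i j : G}
    {q : FockIndex ν} (h : wQ ν n i j q) :
    wpre ν n i j q = ⟨(q.1.1 - n, j, q.1.2.2), h.2.2⟩ := by
  unfold wpre
  exact dif_pos h

private def wc {G : Type*} [Group G] (ν : ℕ → G → ℝ) (n : ℕ) (i j : G)
    (q : FockIndex ν) : ℝ :=
  Real.sqrt (ν n (i⁻¹ * j) * ν (q.1.1 - n) (j⁻¹ * q.1.2.2) / ν q.1.1 (i⁻¹ * q.1.2.2))

/-- existence of the bounded creation operator S^{(n)}_{i,j} of norm at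
most 1 on the Fock space of the random walk. -/
theorem stmt10 {G : Type*} [Group G] [Countable G]
(μ : G → ℝ) (hμnn : ∀ g : G, 0 ≤ μ g)
    (hμfin : (Function.support μ).Finite)
    (hμgen : Subsemigroup.closure (Function.support μ) = ⊤)
    (hμsum : ∑ᶠ g : G, μ g = 1)
    (ν : ℕ → G → ℝ)
    (hν0 : ∀ x : G, ν 0 x = if x = 1 then 1 else 0)
    (hνs : ∀ (m : ℕ) (x : G), ν (m + 1) x = ∑ᶠ g : G, ν m g * μ (g⁻¹ * x))
    (n : ℕ) (i j : G) (hij : 0 < ν n (i⁻¹ * j)) :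
    ∃ S : FockSpace ν →L[ℝ] FockSpace ν, ‖S‖ ≤ 1 ∧
      ∀ (m : ℕ) (j' k : G) (h : 0 < ν m (j'⁻¹ * k)),
        (j' = j → ∃ h' : 0 < ν (n + m) (i⁻¹ * k),
          S (fockVec ν ⟨(m, j', k), h⟩) =
            Real.sqrt (ν n (i⁻¹ * j) * ν m (j⁻¹ * k) / ν (n + m) (i⁻¹ * k)) •
              fockVec ν ⟨(n + m, i, k), h'⟩) ∧
        (j' ≠ j → S (fockVec ν ⟨(m, j', k), h⟩) = 0) := by
  classical
  have hnn := nu_nonneg μ ν hμnn hν0 hνs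
  have hsub := nu_submul μ ν hμnn hμfin hν0 hνs n i j
  -- injectivity of the index map on the support
  have hinj : ∀ q q' : FockIndex ν, wQ ν n i j q → wQ ν n i j q' →
      wpre ν n i j q = wpre ν n i j q' → q = q' := by
    rintro ⟨⟨m1, j1, k1⟩, h1⟩ ⟨⟨m2, j2, k2⟩, h2⟩ hq hq' hpre
    rw [wpre_pos hq, wpre_pos hq'] at hpre
    obtain ⟨hi1, hn1, -⟩ := id hq
    obtain ⟨hi2, hn2, -⟩ := id hq'
    have hm : m1 - n = m2 - n := congrArg (fun z : FockIndex ν => z.1.1) hpre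
    have hk : k1 = k2 := congrArg (fun z : FockIndex ν => z.1.2.2) hpre
    simp only at hi1 hi2 hn1 hn2
    apply Subtype.ext
    simp only [Prod.mk.injEq]
    refine ⟨by omega, hi1.trans hi2.symm, hk⟩
  -- the weights are at most 1 in absolute value
  have hc : ∀ q : FockIndex ν, wQ ν n i j q → |wc ν n i j q| ≤ 1 := by
    intro q hq
    obtain ⟨hi1, hn1, -⟩ := id hq
    unfold wc
    rw [abs_of_nonneg (Real.sqrt_nonneg _)]
    have hle : ν n (i⁻¹ * j) * ν (q.1.1 - n) (j⁻¹ * q.1.2.2) ≤ ν q.1.1 (i⁻¹ * q.1.2.2) := by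
      have := hsub (q.1.1 - n) q.1.2.2
      rwa [Nat.add_sub_cancel' hn1] at this
    have hpos : 0 < ν q.1.1 (i⁻¹ * q.1.2.2) := by
      have := q.2
      rwa [hi1] at this
    calc Real.sqrt (ν n (i⁻¹ * j) * ν (q.1.1 - n) (j⁻¹ * q.1.2.2) / ν q.1.1 (i⁻¹ * q.1.2.2))
        ≤ Real.sqrt 1 := Real.sqrt_le_sqrt ((div_le_one hpos).2 hle)
      _ = 1 := Real.sqrt_one
  obtain ⟨S, hS1, hS2⟩ :=
    exists_weighted_comp (wQ ν n i j) (wpre ν n i j) (wc ν n i j) hinj hc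
  refine ⟨S, hS1, ?_⟩
  intro m j' k h
  constructor
  · intro hj'
    subst hj'
    have hpos : 0 < ν (n + m) (i⁻¹ * k) := lt_of_lt_of_le (mul_pos hij h) (hsub m k)
    refine ⟨hpos, ?_⟩
    apply lp.ext
    funext q
    rw [hS2]
    have hQq0 : wQ ν n i j' (⟨(n + m, i, k), hpos⟩ : FockIndex ν) := by
      refine ⟨rfl, Nat.le_add_right n m, ?_⟩
      simpa [Nat.add_sub_cancel_left] using h
    have hpre0 : wpre ν n i j' (⟨(n + m, i, k), hpos⟩ : FockIndex ν)
        = (⟨(m, j', k), h⟩ : FockIndex ν) := by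
      rw [wpre_pos hQq0]
      apply Subtype.ext
      simp [Nat.add_sub_cancel_left]
    have hwc0 : wc ν n i j' (⟨(n + m, i, k), hpos⟩ : FockIndex ν) =
        Real.sqrt (ν n (i⁻¹ * j') * ν m (j'⁻¹ * k) / ν (n + m) (i⁻¹ * k)) := by
      unfold wc
      simp [Nat.add_sub_cancel_left]
    rw [show (Real.sqrt (ν n (i⁻¹ * j') * ν m (j'⁻¹ * k) / ν (n + m) (i⁻¹ * k)) •
        fockVec ν (⟨(n + m, i, k), hpos⟩ : FockIndex ν)) q
        = Real.sqrt (ν n (i⁻¹ * j') * ν m (j'⁻¹ * k) / ν (n + m) (i⁻¹ * k)) *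
        (fockVec ν (⟨(n + m, i, k), hpos⟩ : FockIndex ν)) q from by rw [lp.coeFn_smul]; rfl]
    by_cases hqq : q = (⟨(n + m, i, k), hpos⟩ : FockIndex ν)
    · subst hqq
      rw [if_pos hQq0, hpre0, hwc0]
      have hf1 : ∀ a : FockIndex ν, (fockVec ν a) a = 1 := fun a => by
        unfold fockVec; exact lp.single_apply_self ..
      exact congrArg _ ((hf1 _).trans (hf1 _).symm)
    · have hz : (fockVec ν (⟨(n + m, i, k), hpos⟩ : FockIndex ν)) q = 0 := by
        unfold fockVec; rw [lp.single_apply_ne _ _ _ hqq]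
      rw [hz, mul_zero]
      by_cases hQ : wQ ν n i j' q
      · rw [if_pos hQ]
        have hne : wpre ν n i j' q ≠ (⟨(m, j', k), h⟩ : FockIndex ν) := by
          intro hep
          apply hqq
          obtain ⟨⟨m1, j1, k1⟩, h1⟩ := q
          rw [wpre_pos hQ] at hep
          obtain ⟨hi1, hn1, -⟩ := id hQ
          have hm : m1 - n = m := congrArg (fun z : FockIndex ν => z.1.1) hep
          have hk : k1 = k := congrArg (fun z : FockIndex ν => z.1.2.2) hep
          simp only at hi1 hn1
          apply Subtype.ext
          simp only [Prod.mk.injEq]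
          exact ⟨by omega, hi1, hk⟩
        unfold fockVec; rw [lp.single_apply_ne _ _ _ hne, mul_zero]
      · rw [if_neg hQ]
  · intro hj'
    apply lp.ext
    funext q
    rw [hS2]
    rw [show ((0 : FockSpace ν) : ∀ _ : FockIndex ν, ℝ) q = 0 from by rw [lp.coeFn_zero]; rfl]
    by_cases hQ : wQ ν n i j q
    · rw [if_pos hQ]
      have hne : wpre ν n i j q ≠ ⟨(m, j', k), h⟩ := by
        intro hep
        apply hj'
        have : (wpre ν n i j q).1.2.1 = j := by
          rw [wpre_pos hQ]
        rw [hep] at this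
        exact this
      unfold fockVec; rw [lp.single_apply_ne _ _ _ hne, mul_zero]
    · rw [if_neg hQ]
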